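/- Let Q be a probability measure and R a finite signed measure on ℝ^d with R(ℝ^d) = 1, and suppose ∫‖x‖² dQ(x) ≤ M and ∫‖x‖² d|R|(x) ≤ M for some M ≥ 0, where |R| is the total variation measure of R. Then for every β ∈ ℝ^d with ‖β‖₂ ≤ 1 and every t > 0, |∫⟨β,x⟩ dQ(x) − ∫⟨β,x⟩ dR(x)| ≤ t·‖Q − R‖_TV + 2M/t; consequently |∫⟨β,x⟩ dQ(x) − ∫⟨β,x⟩ dR(x)| ≤ 2·√(2M·‖Q − R‖_TV). -/

import Mathlib

open MeasureTheory
open scoped RealInnerProductSpace ENNReal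

/-- Integral of a real function against a finite signed measure, via the Jordan
decomposition: `∫ f dR = ∫ f dR⁺ − ∫ f dR⁻`. -/
noncomputable def signedIntegral {X : Type*} [MeasurableSpace X]
    (R : MeasureTheory.SignedMeasure X) (f : X → ℝ) : ℝ :=
  (∫ x, f x ∂(R.toJordanDecomposition.posPart)) - ∫ x, f x ∂(R.toJordanDecomposition.negPart)

/-- The total variation norm of a finite signed measure: the total mass of its total
variation measure. -/
noncomputable def tvNorm {X : Type*} [MeasurableSpace X]
    (s : MeasureTheory.SignedMeasure X) : ℝ :=
  (s.totalVariation Set.univ).toReal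

private lemma aux_integrable_sq {d : ℕ} (μ : Measure (EuclideanSpace ℝ (Fin d)))
    (h : (∫⁻ x, ENNReal.ofReal (‖x‖ ^ 2) ∂μ) ≠ ⊤) :
    Integrable (fun x : EuclideanSpace ℝ (Fin d) => ‖x‖ ^ 2) μ := by
  refine ⟨(continuous_norm.pow 2).aestronglyMeasurable, ?_⟩
  rw [HasFiniteIntegral]
  have heq : (∫⁻ x, ‖‖x‖ ^ 2‖ₑ ∂μ) = ∫⁻ x, ENNReal.ofReal (‖x‖ ^ 2) ∂μ := by
    refine lintegral_congr fun x => ?_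
    rw [Real.enorm_eq_ofReal (by positivity)]
  rw [heq]
  exact lt_top_iff_ne_top.mpr h

private lemma aux_integral_sq_le {d : ℕ} (μ : Measure (EuclideanSpace ℝ (Fin d)))
    (M : ℝ) (hM : 0 ≤ M)
    (h : (∫⁻ x, ENNReal.ofReal (‖x‖ ^ 2) ∂μ) ≤ ENNReal.ofReal M) :
    (∫ x, ‖x‖ ^ 2 ∂μ) ≤ M := by
  rw [integral_eq_lintegral_of_nonneg_ae (f := fun x => ‖x‖ ^ 2) (Filter.Eventually.of_forall fun x => by positivity)
    (continuous_norm.pow 2).aestronglyMeasurable]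
  calc (∫⁻ x, ENNReal.ofReal (‖x‖ ^ 2) ∂μ).toReal
      ≤ (ENNReal.ofReal M).toReal := ENNReal.toReal_mono ENNReal.ofReal_ne_top h
    _ = M := ENNReal.toReal_ofReal hM

private lemma aux_int_inner {d : ℕ} (β : EuclideanSpace ℝ (Fin d)) (hβ : ‖β‖ ≤ 1)
    (μ : Measure (EuclideanSpace ℝ (Fin d))) [IsFiniteMeasure μ]
    (hsq : Integrable (fun x : EuclideanSpace ℝ (Fin d) => ‖x‖ ^ 2) μ) :
    Integrable (fun x : EuclideanSpace ℝ (Fin d) => ⟪β, x⟫) μ := by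
  refine Integrable.mono' ((integrable_const (1 : ℝ)).add hsq)
    (Continuous.aestronglyMeasurable (continuous_const.inner continuous_id)) ?_
  filter_upwards with x
  simp only [Pi.add_apply]
  have h1 : |⟪β, x⟫| ≤ ‖β‖ * ‖x‖ := abs_real_inner_le_norm β x
  rw [Real.norm_eq_abs]
  nlinarith [norm_nonneg x, abs_nonneg (⟪β, x⟫ : ℝ), norm_nonneg β,
    sq_nonneg (‖x‖ - 1)]

set_option maxHeartbeats 1000000 in
theorem stmt_8 {d : ℕ} (hd : 1 ≤ d)
    (Q : Measure (EuclideanSpace ℝ (Fin d))) [IsProbabilityMeasure Q]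
    (R : MeasureTheory.SignedMeasure (EuclideanSpace ℝ (Fin d)))
    (hR1 : R Set.univ = 1)
    (M : ℝ) (hM : 0 ≤ M)
    (hQmom : (∫⁻ x, ENNReal.ofReal (‖x‖ ^ 2) ∂Q) ≤ ENNReal.ofReal M)
    (hRmom : (∫⁻ x, ENNReal.ofReal (‖x‖ ^ 2) ∂(R.totalVariation)) ≤ ENNReal.ofReal M) :
    ∀ β : EuclideanSpace ℝ (Fin d), ‖β‖ ≤ 1 →
      (∀ t : ℝ, 0 < t →
        |(∫ x, ⟪β, x⟫ ∂Q) - signedIntegral R (fun x => ⟪β, x⟫)| ≤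
          t * tvNorm (Q.toSignedMeasure - R) + 2 * M / t) ∧
      |(∫ x, ⟪β, x⟫ ∂Q) - signedIntegral R (fun x => ⟪β, x⟫)| ≤
        2 * Real.sqrt (2 * M * tvNorm (Q.toSignedMeasure - R)) := by
  intro β hβ
  set f : EuclideanSpace ℝ (Fin d) → ℝ := fun x => ⟪β, x⟫ with hf
  have hfc : Continuous f := continuous_const.inner continuous_id
  have hfb : ∀ x, |f x| ≤ ‖x‖ := fun x => by
    calc |f x| ≤ ‖β‖ * ‖x‖ := abs_real_inner_le_norm β x
      _ ≤ 1 * ‖x‖ := mul_le_mul_of_nonneg_right hβ (norm_nonneg x)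
      _ = ‖x‖ := one_mul _
  set Rp := R.toJordanDecomposition.posPart with hRpdef
  set Rm := R.toJordanDecomposition.negPart with hRmdef
  set P : MeasureTheory.SignedMeasure (EuclideanSpace ℝ (Fin d)) :=
    Q.toSignedMeasure - R with hPdef
  set Pp := P.toJordanDecomposition.posPart with hPpdef
  set Pm := P.toJordanDecomposition.negPart with hPmdef
  have htv : R.totalVariation = Rp + Rm := rfl
  -- measure identity
  have hkey : Pp + Rp = Q + Rm + Pm := by
    have h1 : Rp.toSignedMeasure - Rm.toSignedMeasure = R :=
      R.toSignedMeasure_toJordanDecomposition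
    have h2 : Pp.toSignedMeasure - Pm.toSignedMeasure = Q.toSignedMeasure - R :=
      P.toSignedMeasure_toJordanDecomposition
    have h3 : Pp.toSignedMeasure + Rp.toSignedMeasure
        = Q.toSignedMeasure + Rm.toSignedMeasure + Pm.toSignedMeasure := by
      rw [← sub_eq_zero] at h1 h2 ⊢
      calc Pp.toSignedMeasure + Rp.toSignedMeasure
            - (Q.toSignedMeasure + Rm.toSignedMeasure + Pm.toSignedMeasure)
          = (Pp.toSignedMeasure - Pm.toSignedMeasure - (Q.toSignedMeasure - R))
            + (Rp.toSignedMeasure - Rm.toSignedMeasure - R) := by abel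
        _ = 0 := by rw [h1, h2, add_zero]
    rw [← Measure.toSignedMeasure_eq_toSignedMeasure_iff]
    rw [Measure.toSignedMeasure_add, Measure.toSignedMeasure_add, Measure.toSignedMeasure_add]
    exact h3
  -- moment bookkeeping
  have hRpmom : (∫⁻ x, ENNReal.ofReal (‖x‖ ^ 2) ∂(Rp)) ≤ ENNReal.ofReal M := by
    refine le_trans (lintegral_mono' ?_ le_rfl) (htv ▸ hRmom)
    exact Measure.le_add_right le_rfl
  have hRmmom : (∫⁻ x, ENNReal.ofReal (‖x‖ ^ 2) ∂(Rm)) ≤ ENNReal.ofReal M := by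
    refine le_trans (lintegral_mono' ?_ le_rfl) (htv ▸ hRmom)
    exact Measure.le_add_left le_rfl
  have hsqQ : Integrable (fun x : EuclideanSpace ℝ (Fin d) => ‖x‖ ^ 2) Q :=
    aux_integrable_sq Q (ne_top_of_le_ne_top ENNReal.ofReal_ne_top hQmom)
  have hsqRp : Integrable (fun x : EuclideanSpace ℝ (Fin d) => ‖x‖ ^ 2) Rp :=
    aux_integrable_sq Rp (ne_top_of_le_ne_top ENNReal.ofReal_ne_top hRpmom)
  have hsqRm : Integrable (fun x : EuclideanSpace ℝ (Fin d) => ‖x‖ ^ 2) Rm :=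
    aux_integrable_sq Rm (ne_top_of_le_ne_top ENNReal.ofReal_ne_top hRmmom)
  have hSQ : (∫ x, ‖x‖ ^ 2 ∂Q) ≤ M := aux_integral_sq_le Q M hM hQmom
  have hSR : (∫ x, ‖x‖ ^ 2 ∂(Rp)) + (∫ x, ‖x‖ ^ 2 ∂(Rm)) ≤ M := by
    have h := aux_integral_sq_le (Rp + Rm) M hM (htv ▸ hRmom)
    rwa [integral_add_measure hsqRp hsqRm] at h
  have hSQ0 : (0:ℝ) ≤ ∫ x, ‖x‖ ^ 2 ∂Q := integral_nonneg fun x => by positivity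
  have hSRp0 : (0:ℝ) ≤ ∫ x, ‖x‖ ^ 2 ∂(Rp) := integral_nonneg fun x => by positivity
  have hSRm0 : (0:ℝ) ≤ ∫ x, ‖x‖ ^ 2 ∂(Rm) := integral_nonneg fun x => by positivity
  have hsint : signedIntegral R f = (∫ x, f x ∂(Rp)) - ∫ x, f x ∂(Rm) := rfl
  have hδ : tvNorm P = (Pp Set.univ).toReal + (Pm Set.univ).toReal := by
    have h : P.totalVariation = Pp + Pm := rfl
    rw [tvNorm, h, Measure.add_apply,
      ENNReal.toReal_add (measure_ne_top _ _) (measure_ne_top _ _)]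
  have hδ0 : 0 ≤ tvNorm P := ENNReal.toReal_nonneg
  -- the main estimate for each t
  have main : ∀ t : ℝ, 0 < t →
      |(∫ x, f x ∂Q) - signedIntegral R f| ≤ t * tvNorm P + 2 * M / t := by
    intro t ht
    set g : EuclideanSpace ℝ (Fin d) → ℝ := fun x => max (-t) (min t (f x)) with hg
    have hgc : Continuous g := continuous_const.max (continuous_const.min hfc)
    have hgb : ∀ x, |g x| ≤ t := fun x =>
      abs_le.mpr ⟨le_max_left _ _, max_le (by linarith) (min_le_left _ _)⟩
    have hgint : ∀ (μ : Measure (EuclideanSpace ℝ (Fin d))) [IsFiniteMeasure μ],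
        Integrable g μ := fun μ _ =>
      Integrable.mono' (integrable_const t) hgc.aestronglyMeasurable
        (Filter.Eventually.of_forall fun x => by rw [Real.norm_eq_abs]; exact hgb x)
    have hdiff : ∀ x, |f x - g x| * t ≤ ‖x‖ ^ 2 := by
      intro x
      have hb := abs_le.mp (hfb x)
      rcases le_total t (f x) with h1 | h1
      · have hgx : g x = t := by
          simp only [hg, min_eq_left h1, max_eq_right (by linarith : -t ≤ t)]
        rw [hgx, abs_of_nonneg (by linarith)]
        nlinarith [hb.2]
      · rcases le_total (f x) (-t) with h2 | h2
        · have hgx : g x = -t := by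
            simp only [hg, min_eq_right (by linarith : f x ≤ t), max_eq_left h2]
          rw [hgx, abs_of_nonpos (by linarith)]
          nlinarith [hb.1]
        · have hgx : g x = f x := by
            simp only [hg, min_eq_right h1, max_eq_right h2]
          rw [hgx, sub_self, abs_zero, zero_mul]
          positivity
    -- key integral identity for g
    have hIg : (∫ x, g x ∂Pp) + (∫ x, g x ∂(Rp))
        = (∫ x, g x ∂Q) + (∫ x, g x ∂(Rm)) + ∫ x, g x ∂Pm := by
      calc (∫ x, g x ∂Pp) + (∫ x, g x ∂(Rp)) = ∫ x, g x ∂(Pp + Rp) :=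
            (integral_add_measure (hgint Pp) (hgint Rp)).symm
        _ = ∫ x, g x ∂(Q + Rm + Pm) := by rw [hkey]
        _ = (∫ x, g x ∂Q) + (∫ x, g x ∂(Rm)) + ∫ x, g x ∂Pm := by
            rw [integral_add_measure ((hgint Q).add_measure (hgint Rm)) (hgint Pm),
              integral_add_measure (hgint Q) (hgint Rm)]
    -- bounds on the truncated integrals against P parts
    have hPpb : |∫ x, g x ∂Pp| ≤ t * (Pp Set.univ).toReal := by
      have h := norm_integral_le_of_norm_le_const (μ := Pp) (f := g) (C := t)
        (Filter.Eventually.of_forall fun x => by rw [Real.norm_eq_abs]; exact hgb x)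
      rwa [Real.norm_eq_abs] at h
    have hPmb : |∫ x, g x ∂Pm| ≤ t * (Pm Set.univ).toReal := by
      have h := norm_integral_le_of_norm_le_const (μ := Pm) (f := g) (C := t)
        (Filter.Eventually.of_forall fun x => by rw [Real.norm_eq_abs]; exact hgb x)
      rwa [Real.norm_eq_abs] at h
    -- tail bounds
    have tail : ∀ (μ : Measure (EuclideanSpace ℝ (Fin d))) [IsFiniteMeasure μ],
        Integrable (fun x : EuclideanSpace ℝ (Fin d) => ‖x‖ ^ 2) μ →
        |(∫ x, f x ∂μ) - ∫ x, g x ∂μ| ≤ (∫ x, ‖x‖ ^ 2 ∂μ) / t := by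
      intro μ _ hsq
      have hfint : Integrable f μ := aux_int_inner β hβ μ hsq
      rw [← integral_sub hfint (hgint μ)]
      have h1 : |∫ x, (f x - g x) ∂μ| ≤ ∫ x, |f x - g x| ∂μ := by
        simpa [Real.norm_eq_abs] using
          norm_integral_le_integral_norm (μ := μ) (f := fun x => f x - g x)
      refine h1.trans ?_
      rw [← integral_div]
      refine integral_mono (hfint.sub (hgint μ)).abs (hsq.div_const t) fun x => ?_
      rw [le_div_iff₀ ht]
      exact hdiff x
    have tQ := tail Q hsqQ
    have tRp := tail Rp hsqRp
    have tRm := tail Rm hsqRm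
    -- combine
    rw [hsint]
    have e1 : t * tvNorm P = t * (Pp Set.univ).toReal + t * (Pm Set.univ).toReal := by
      rw [hδ]; ring
    have e2 : 2 * M / t = M / t + M / t := by ring
    have h3 : (∫ x, ‖x‖ ^ 2 ∂Q) / t ≤ M / t := by gcongr
    have h4 : (∫ x, ‖x‖ ^ 2 ∂(Rp)) / t + (∫ x, ‖x‖ ^ 2 ∂(Rm)) / t ≤ M / t := by
      rw [← add_div]; gcongr
    obtain ⟨l1, u1⟩ := abs_le.mp hPpb
    obtain ⟨l2, u2⟩ := abs_le.mp hPmb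
    obtain ⟨l3, u3⟩ := abs_le.mp tQ
    obtain ⟨l4, u4⟩ := abs_le.mp tRp
    obtain ⟨l5, u5⟩ := abs_le.mp tRm
    rw [abs_le]
    constructor <;> [skip; skip] <;> linarith
  refine ⟨main, ?_⟩
  -- second part
  set δ := tvNorm P with hδdef
  by_cases hcase : 0 < M ∧ 0 < δ
  · obtain ⟨hMpos, hδpos⟩ := hcase
    set a := Real.sqrt (2 * M) with ha
    set b := Real.sqrt δ with hb
    have ha0 : 0 < a := Real.sqrt_pos.mpr (by linarith)
    have hb0 : 0 < b := Real.sqrt_pos.mpr hδpos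
    have ha2 : a ^ 2 = 2 * M := Real.sq_sqrt (by linarith)
    have hb2 : b ^ 2 = δ := Real.sq_sqrt hδ0
    have hst : Real.sqrt (2 * M * δ) = a * b := by
      rw [Real.sqrt_mul (by linarith) δ]
    have ht : 0 < a / b := div_pos ha0 hb0
    calc |(∫ x, f x ∂Q) - signedIntegral R f| ≤ (a / b) * δ + 2 * M / (a / b) :=
          main (a / b) ht
      _ = 2 * (a * b) := by
          rw [← hb2, ← ha2]; field_simp; ring
      _ = 2 * Real.sqrt (2 * M * δ) := by rw [hst]
  · -- degenerate case : M * δ = 0, RHS = 0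
    have hMδ : M = 0 ∨ δ = 0 := by
      rcases lt_or_eq_of_le hM with hM' | hM'
      · rcases lt_or_eq_of_le hδ0 with hδ' | hδ'
        · exact absurd ⟨hM', hδ'⟩ hcase
        · exact Or.inr hδ'.symm
      · exact Or.inl hM'.symm
    have hsmall : ∀ ε : ℝ, 0 < ε → |(∫ x, f x ∂Q) - signedIntegral R f| ≤ ε := by
      intro ε hε
      rcases hMδ with hM0 | hδ0'
      · have ht : 0 < ε / (δ + 1) := div_pos hε (by linarith)
        have h := main (ε / (δ + 1)) ht
        rw [hM0] at h
        have : ε / (δ + 1) * δ + 2 * 0 / (ε / (δ + 1)) ≤ ε := by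
          rw [mul_zero, zero_div, add_zero, div_mul_eq_mul_div, div_le_iff₀ (by linarith)]
          nlinarith
        linarith
      · have ht : 0 < (2 * M + 1) / ε := div_pos (by linarith) hε
        have h := main ((2 * M + 1) / ε) ht
        rw [hδ0'] at h
        have : (2 * M + 1) / ε * 0 + 2 * M / ((2 * M + 1) / ε) ≤ ε := by
          rw [mul_zero, zero_add, div_div_eq_mul_div, div_le_iff₀ (by linarith : (0:ℝ) < 2 * M + 1)]
          nlinarith
        linarith
    have hle0 : |(∫ x, f x ∂Q) - signedIntegral R f| ≤ 0 := by
      by_contra hcon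
      push_neg at hcon
      have := hsmall (|(∫ x, f x ∂Q) - signedIntegral R f| / 2) (by linarith)
      linarith
    refine hle0.trans ?_
    positivity
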